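/- Let φ, φ̃ : 𝔻 → 𝔻 be holomorphic with φ(z) = λ z^p ψ(z) and φ̃(z) = μ z^q ψ̃(z), where p, q ≥ 2, q is not a multiple of p, λ, μ ≠ 0, and ψ(0), ψ̃(0) ≠ 0. Then the composition operator C_{φ̃} on H²(𝔻) does not belong to the weak-operator-topology closure of the polynomial algebra generated by C_φ. -/

import Mathlib

open Complex Metric Polynomial

/-- The Hardy space `H²(𝔻)` realized as `ℓ²` of Taylor coefficients. -/
noncomputable abbrev HardyDisc := lp (fun _ : ℕ => ℂ) 2

/-- Evaluation of the power series with coefficient sequence `x` at `z ∈ 𝔻`. -/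
noncomputable def discEval (x : HardyDisc) (z : ℂ) : ℂ := ∑' m : ℕ, x m * z ^ m

/-- coefficient extraction from a factored power series. -/
lemma key_coeff (a : ℕ → ℂ) (M : ℝ) (hM : ∀ m, ‖a m‖ ≤ M) (k : ℕ) (g : ℂ → ℂ)
    (hg : ContinuousAt g 0) (δ : ℝ) (hδ : 0 < δ)
    (hfac : ∀ z : ℂ, ‖z‖ < δ → ∑' m, a m * z ^ m = z ^ k * g z) :
    (∀ m < k, a m = 0) ∧ a k = g 0 := by
  have hM0 : 0 ≤ M := le_trans (norm_nonneg _) (hM 0)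
  have hsum : ∀ (b : ℕ → ℂ), (∀ m, ‖b m‖ ≤ M) → ∀ z : ℂ, ‖z‖ < 1 →
      Summable (fun i => b i * z ^ i) := by
    intro b hb z hz
    apply Summable.of_norm_bounded (g := fun i => M * ‖z‖ ^ i)
      ((summable_geometric_of_lt_one (norm_nonneg z) hz).mul_left M)
    intro i
    rw [norm_mul, norm_pow]
    exact mul_le_mul_of_nonneg_right (hb i) (by positivity)
  have main : ∀ m, m ≤ k → (∀ i, i < m → a i = 0) → a m = 0 ^ (k - m) * g 0 := by
    intro m hmk hprev
    set h : ℂ → ℂ := fun z => ∑' i, a (i + m) * z ^ i with hh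
    -- Step 1: factor out z^m
    have hfac1 : ∀ z : ℂ, ‖z‖ < 1 → (∑' i, a i * z ^ i) = z ^ m * h z := by
      intro z hz
      have hs := hsum a hM z hz
      rw [← Summable.sum_add_tsum_nat_add m hs]
      have : ∑ i ∈ Finset.range m, a i * z ^ i = 0 :=
        Finset.sum_eq_zero (fun i hi => by rw [hprev i (Finset.mem_range.mp hi), zero_mul])
      rw [this, zero_add, hh]
      simp only [pow_add]
      rw [← tsum_mul_left]
      congr 1; ext i; ring
    -- Step 2: h tends to a m at 0
    have hbound : ∀ z : ℂ, ‖z‖ ≤ 1/2 → ‖h z - a m‖ ≤ (2*M) * ‖z‖ := by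
      intro z hz
      have hz1 : ‖z‖ < 1 := lt_of_le_of_lt hz (by norm_num)
      have hs : Summable (fun i => a (i + m) * z ^ i) :=
        hsum (fun i => a (i + m)) (fun i => hM _) z hz1
      have h0 : h z = a m + ∑' i, a (i + 1 + m) * z ^ (i + 1) := by
        rw [hh]
        simpa using Summable.tsum_eq_zero_add hs
      rw [h0, add_sub_cancel_left]
      have hle : ∀ i : ℕ, ‖a (i + 1 + m) * z ^ (i + 1)‖ ≤ (M * ‖z‖) * ‖z‖ ^ i := by
        intro i
        rw [norm_mul, norm_pow, pow_succ']
        calc ‖a (i+1+m)‖ * (‖z‖ * ‖z‖ ^ i) ≤ M * (‖z‖ * ‖z‖ ^ i) :=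
              mul_le_mul_of_nonneg_right (hM _) (by positivity)
          _ = (M * ‖z‖) * ‖z‖ ^ i := by ring
      have hgeo : Summable (fun i : ℕ => (M * ‖z‖) * ‖z‖ ^ i) :=
        (summable_geometric_of_lt_one (norm_nonneg z) hz1).mul_left (M * ‖z‖)
      have hsn : Summable (fun i : ℕ => ‖a (i + 1 + m) * z ^ (i + 1)‖) :=
        Summable.of_nonneg_of_le (fun i => norm_nonneg _) hle hgeo
      calc ‖∑' i, a (i + 1 + m) * z ^ (i + 1)‖
          ≤ ∑' i, ‖a (i + 1 + m) * z ^ (i + 1)‖ := norm_tsum_le_tsum_norm hsn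
        _ ≤ ∑' i, (M * ‖z‖) * ‖z‖ ^ i := Summable.tsum_le_tsum hle hsn hgeo
        _ = (M * ‖z‖) * (1 - ‖z‖)⁻¹ := by
            rw [tsum_mul_left, tsum_geometric_of_lt_one (norm_nonneg z) hz1]
        _ ≤ (2*M) * ‖z‖ := by
            have h1 : (1 - ‖z‖)⁻¹ ≤ 2 := by
              rw [inv_le_comm₀ (by linarith) (by norm_num)]
              linarith
            have : 0 ≤ M * ‖z‖ := by positivity
            calc (M * ‖z‖) * (1-‖z‖)⁻¹ ≤ (M * ‖z‖) * 2 := mul_le_mul_of_nonneg_left h1 this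
              _ = (2*M) * ‖z‖ := by ring
    have htendsh : Filter.Tendsto h (nhds 0) (nhds (a m)) := by
      rw [← tendsto_sub_nhds_zero_iff]
      have hlim : Filter.Tendsto (fun z : ℂ => (2*M) * ‖z‖) (nhds 0) (nhds 0) := by
        have := (continuous_norm.tendsto (0:ℂ)).const_mul (2*M)
        simpa using this
      apply squeeze_zero_norm' _ hlim
      · filter_upwards [Metric.ball_mem_nhds (0:ℂ) (by norm_num : (0:ℝ) < 1/2)] with z hz
        exact hbound z (le_of_lt (by simpa [Complex.dist_eq] using hz))
    -- Step 4/5: compare with z^(k-m) * g z on punctured nbhd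
    have hev : ∀ᶠ z in nhdsWithin (0:ℂ) {(0:ℂ)}ᶜ, h z = z ^ (k - m) * g z := by
      have hball : Metric.ball (0:ℂ) (min δ 1) ∈ nhds (0:ℂ) :=
        Metric.ball_mem_nhds _ (lt_min hδ one_pos)
      filter_upwards [nhdsWithin_le_nhds hball, self_mem_nhdsWithin] with z hz hz0
      simp only [Metric.mem_ball, Complex.dist_eq, sub_zero] at hz
      have hz1 : ‖z‖ < 1 := lt_of_lt_of_le hz (min_le_right _ _)
      have hzδ : ‖z‖ < δ := lt_of_lt_of_le hz (min_le_left _ _)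
      have := (hfac1 z hz1).symm.trans (hfac z hzδ)
      have hzm : z ^ m ≠ 0 := pow_ne_zero _ (by simpa using hz0)
      have hkm : z ^ k = z ^ m * z ^ (k - m) := by
        rw [← pow_add, Nat.add_sub_cancel' hmk]
      rw [hkm, mul_assoc] at this
      exact mul_left_cancel₀ hzm this
    have ht1 : Filter.Tendsto h (nhdsWithin (0:ℂ) {(0:ℂ)}ᶜ) (nhds (a m)) :=
      htendsh.mono_left nhdsWithin_le_nhds
    have ht2 : Filter.Tendsto (fun z : ℂ => z ^ (k-m) * g z) (nhdsWithin (0:ℂ) {(0:ℂ)}ᶜ)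
        (nhds ((0:ℂ) ^ (k-m) * g 0)) := by
      exact ((continuousAt_pow (0:ℂ) (k-m)).mul hg).continuousWithinAt.tendsto
    exact tendsto_nhds_unique (ht1.congr' hev) ht2
  have vanish : ∀ m, m < k → a m = 0 := by
    intro m
    induction m using Nat.strong_induction_on with
    | _ m ih =>
      intro hmk
      rw [main m (le_of_lt hmk) (fun i hi => ih i hi (lt_trans hi hmk))]
      rw [zero_pow (Nat.sub_ne_zero_of_lt hmk), zero_mul]
  refine ⟨vanish, ?_⟩
  rw [main k le_rfl vanish, Nat.sub_self, pow_zero, one_mul]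


/-- The `m`-th coordinate functional on the Hardy space. -/
noncomputable def coordCLM (m : ℕ) : HardyDisc →L[ℂ] ℂ :=
  LinearMap.mkContinuous
    { toFun := fun x => x m
      map_add' := fun x y => by simp [lp.coeFn_add]
      map_smul' := fun c x => by simp [lp.coeFn_smul] }
    1 (fun x => by
        show ‖x m‖ ≤ 1 * ‖x‖; simpa using lp.norm_apply_le_norm (by norm_num : (2 : ENNReal) ≠ 0) x m)

@[simp] lemma coordCLM_apply (m : ℕ) (x : HardyDisc) : coordCLM m x = x m := rfl

lemma discEval_single (n : ℕ) (z : ℂ) : discEval (lp.single 2 n 1) z = z ^ n := by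
  unfold discEval
  rw [tsum_eq_single n]
  · rw [lp.single_apply_self, one_mul]
  · intro m hm
    rw [lp.single_apply_ne 2 n _ hm, zero_mul]

/-- If `φ(z) = λ z^p ψ(z)` and `φ̃(z) = μ z^q ψ̃(z)` with `p, q ≥ 2`,
`q` not a multiple of `p`, `λ, μ ≠ 0`, `ψ(0), ψ̃(0) ≠ 0`, then the composition operator
`C_{φ̃}` on `H²(𝔻)` is not in the WOT-closure of the polynomial algebra generated by `C_φ`. -/
theorem composition_not_in_wot_closure_disc
    (φ φt ψ ψt : ℂ → ℂ) (p q : ℕ) (hp : 2 ≤ p) (hq : 2 ≤ q) (hpq : ¬ p ∣ q)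
    (lam mu : ℂ) (hlam : lam ≠ 0) (hmu : mu ≠ 0)
    (hφself : ∀ z ∈ ball (0 : ℂ) 1, φ z ∈ ball (0 : ℂ) 1)
    (hφtself : ∀ z ∈ ball (0 : ℂ) 1, φt z ∈ ball (0 : ℂ) 1)
    (hψhol : DifferentiableOn ℂ ψ (ball (0 : ℂ) 1))
    (hψthol : DifferentiableOn ℂ ψt (ball (0 : ℂ) 1))
    (hform : ∀ z ∈ ball (0 : ℂ) 1, φ z = lam * z ^ p * ψ z)
    (hformt : ∀ z ∈ ball (0 : ℂ) 1, φt z = mu * z ^ q * ψt z)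
    (hψ0 : ψ 0 ≠ 0) (hψt0 : ψt 0 ≠ 0)
    (Cφ Cφt : HardyDisc →L[ℂ] HardyDisc)
    (hCφ : ∀ x : HardyDisc, ∀ z ∈ ball (0 : ℂ) 1, discEval (Cφ x) z = discEval x (φ z))
    (hCφt : ∀ x : HardyDisc, ∀ z ∈ ball (0 : ℂ) 1, discEval (Cφt x) z = discEval x (φt z)) :
    ContinuousLinearMapWOT.ofCLM (σ := RingHom.id ℂ) (E := HardyDisc) (F := HardyDisc) Cφt ∉
      closure ((ContinuousLinearMapWOT.ofCLM (σ := RingHom.id ℂ) (E := HardyDisc) (F := HardyDisc)) ''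
        {A : HardyDisc →L[ℂ] HardyDisc | ∃ P : Polynomial ℂ, A = aeval Cφ P}) := by
  have hball : ∀ z : ℂ, ‖z‖ < 1 → z ∈ ball (0:ℂ) 1 := by
    intro z hz; simpa [mem_ball, Complex.dist_eq] using hz
  have h0ball : (0:ℂ) ∈ ball (0:ℂ) 1 := by simpa using one_pos
  -- φ fixes 0
  have hφ0 : φ 0 = 0 := by
    rw [hform 0 h0ball, zero_pow (by omega : p ≠ 0)]; ring
  -- φ is continuous at 0
  have hψcont : ContinuousAt ψ 0 :=
    (hψhol.continuousOn.continuousAt (isOpen_ball.mem_nhds h0ball))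
  have hψtcont : ContinuousAt ψt 0 :=
    (hψthol.continuousOn.continuousAt (isOpen_ball.mem_nhds h0ball))
  have hφcont : ContinuousAt φ 0 := by
    have h1 : ContinuousAt (fun z : ℂ => lam * z ^ p * ψ z) 0 :=
      ((continuousAt_const.mul (continuousAt_pow 0 p)).mul hψcont)
    apply h1.congr
    filter_upwards [isOpen_ball.mem_nhds h0ball] with z hz
    exact (hform z hz).symm
  set e1 : HardyDisc := lp.single 2 1 1 with he1
  -- the iterates factor
  have fact : ∀ j : ℕ, ∃ g : ℂ → ℂ, ∃ δ : ℝ, 0 < δ ∧ δ ≤ 1 ∧ ContinuousAt g 0 ∧ g 0 ≠ 0 ∧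
      ∀ z : ℂ, ‖z‖ < δ → discEval ((Cφ ^ j) e1) z = z ^ (p ^ j) * g z := by
    intro j
    induction j with
    | zero =>
      refine ⟨fun _ => 1, 1, one_pos, le_rfl, continuousAt_const, one_ne_zero, ?_⟩
      intro z hz
      rw [pow_zero, ContinuousLinearMap.one_apply, he1, discEval_single]
      simp
    | succ j ih =>
      obtain ⟨g, δ, hδ0, hδ1, hgc, hg0, hfac⟩ := ih
      -- choose δ' such that ‖z‖ < δ' → ‖φ z‖ < δ
      have := hφcont.tendsto
      rw [Metric.tendsto_nhds_nhds] at this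
      obtain ⟨δ', hδ'0, hδ'⟩ := this δ hδ0
      refine ⟨fun z => lam ^ (p ^ j) * ψ z ^ (p ^ j) * g (φ z), min δ' 1,
        lt_min hδ'0 one_pos, min_le_right _ _, ?_, ?_, ?_⟩
      · have hgφ0 : ContinuousAt g (φ 0) := by rw [hφ0]; exact hgc
        exact ((continuousAt_const.mul (hψcont.pow _)).mul (hgφ0.comp hφcont))
      · simp only [hφ0]
        exact mul_ne_zero (mul_ne_zero (pow_ne_zero _ hlam) (pow_ne_zero _ hψ0)) hg0
      · intro z hz
        have hz1 : ‖z‖ < 1 := lt_of_lt_of_le hz (min_le_right _ _)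
        have hzδ' : ‖z‖ < δ' := lt_of_lt_of_le hz (min_le_left _ _)
        have hφz : ‖φ z‖ < δ := by
          have := hδ' (x := z) (by simpa [Complex.dist_eq] using hzδ')
          simpa [Complex.dist_eq, hφ0] using this
        have hmem := hball z hz1
        calc discEval ((Cφ ^ (j+1)) e1) z = discEval (Cφ ((Cφ ^ j) e1)) z := by
              rw [pow_succ']; rfl
          _ = discEval ((Cφ ^ j) e1) (φ z) := hCφ _ z hmem
          _ = (φ z) ^ (p ^ j) * g (φ z) := hfac _ hφz
          _ = z ^ (p ^ (j+1)) * (lam ^ (p ^ j) * ψ z ^ (p ^ j) * g (φ z)) := by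
              rw [hform z hmem]
              rw [mul_pow, mul_pow, ← pow_mul, pow_succ]
              ring
  -- coefficients of iterates
  set u : ℕ → ℕ → ℂ := fun j m => ((Cφ ^ j) e1 : HardyDisc) m with hu
  have hcoeff : ∀ j : ℕ, (∀ m < p ^ j, u j m = 0) ∧ u j (p ^ j) ≠ 0 := by
    intro j
    obtain ⟨g, δ, hδ0, hδ1, hgc, hg0, hfac⟩ := fact j
    have h := key_coeff (fun m => ((Cφ ^ j) e1 : HardyDisc) m) ‖(Cφ ^ j) e1‖
      (fun m => lp.norm_apply_le_norm (by norm_num : (2 : ENNReal) ≠ 0) _ m)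
      (p ^ j) g hgc δ hδ0 (fun z hz => hfac z hz)
    refine ⟨h.1, ?_⟩
    intro h0
    exact hg0 (h.2.symm.trans h0)
  -- coefficients of Cφt e1
  have hcoefft : (∀ m < q, (Cφt e1 : HardyDisc) m = 0) ∧
      (Cφt e1 : HardyDisc) q = mu * ψt 0 := by
    apply key_coeff (fun m => (Cφt e1 : HardyDisc) m) ‖Cφt e1‖
      (fun m => lp.norm_apply_le_norm (by norm_num : (2 : ENNReal) ≠ 0) _ m)
      q (fun z => mu * ψt z) (continuousAt_const.mul hψtcont) 1 one_pos
    intro z hz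
    have hmem := hball z hz
    calc (∑' m, (Cφt e1 : HardyDisc) m * z ^ m) = discEval (Cφt e1) z := rfl
      _ = discEval e1 (φt z) := hCφt _ z hmem
      _ = φt z := by rw [he1, discEval_single, pow_one]
      _ = mu * z ^ q * ψt z := hformt z hmem
      _ = z ^ q * (mu * ψt z) := by ring
  -- set up the triangular system
  set J : ℕ := Nat.log p q with hJ
  have hpJ : p ^ J ≤ q := Nat.pow_log_le_self p (by omega)
  have hqJ : q < p ^ (J + 1) := Nat.lt_pow_succ_log_self (by omega) q
  set M : Matrix (Fin (J+1)) (Fin (J+1)) ℂ := fun j i => u j (p ^ (i:ℕ)) with hM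
  have hMtri : M.BlockTriangular id := by
    intro i j hij
    exact (hcoeff (i:ℕ)).1 _ (Nat.pow_lt_pow_right (by omega) hij)
  have hdet : M.det ≠ 0 := by
    rw [Matrix.det_of_upperTriangular hMtri]
    exact Finset.prod_ne_zero_iff.mpr (fun i _ => (hcoeff (i:ℕ)).2)
  set v : Fin (J+1) → ℂ := fun j => u j q with hv
  set c : Fin (J+1) → ℂ := M⁻¹.mulVec v with hc
  have hMc : M.mulVec c = v := by
    rw [hc, Matrix.mulVec_mulVec, Matrix.mul_nonsing_inv M (isUnit_iff_ne_zero.mpr hdet),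
      Matrix.one_mulVec]
  -- the key linear relation for all powers
  have hrel : ∀ d : ℕ, u d q = ∑ i : Fin (J+1), c i * u d (p ^ (i:ℕ)) := by
    intro d
    by_cases hd : d ≤ J
    · have h2 := congrFun hMc ⟨d, by omega⟩
      simp only [Matrix.mulVec, dotProduct, hM, hv] at h2
      rw [← h2]
      exact Finset.sum_congr rfl (fun i _ => mul_comm _ _)
    · have hd' : q < p ^ d := lt_of_lt_of_le hqJ (Nat.pow_le_pow_right (by omega) (by omega))
      rw [(hcoeff d).1 q hd']
      symm
      apply Finset.sum_eq_zero
      intro i _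
      rw [(hcoeff d).1 (p ^ (i:ℕ)) (lt_of_le_of_lt (le_trans
        (Nat.pow_le_pow_right (by omega) (by omega : (i:ℕ) ≤ J)) hpJ) hd'), mul_zero]
  -- the separating functional
  set F : (HardyDisc →WOT[ℂ] HardyDisc) → ℂ :=
    fun B => coordCLM q (B e1) - ∑ i : Fin (J+1), c i * coordCLM (p ^ (i:ℕ)) (B e1) with hF
  have hFcont : Continuous F := by
    apply Continuous.sub
    · exact ContinuousLinearMapWOT.continuous_dual_apply e1 (coordCLM q)
    · exact continuous_finset_sum _ (fun i _ => (continuous_const.mul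
        (ContinuousLinearMapWOT.continuous_dual_apply e1 (coordCLM (p ^ (i:ℕ))))))
  -- F vanishes on the polynomial algebra
  have hFzero : ∀ B ∈ ((ContinuousLinearMapWOT.ofCLM (σ := RingHom.id ℂ) (E := HardyDisc) (F := HardyDisc)) ''
      {A : HardyDisc →L[ℂ] HardyDisc | ∃ P : Polynomial ℂ, A = aeval Cφ P}), F B = 0 := by
    rintro B ⟨A, ⟨P, rfl⟩, rfl⟩
    have happ : ∀ m : ℕ,
        coordCLM m ((ContinuousLinearMapWOT.ofCLM (σ := RingHom.id ℂ) (E := HardyDisc) (F := HardyDisc) (aeval Cφ P)) e1)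
        = ∑ d ∈ Finset.range (P.natDegree + 1), P.coeff d * u d m := by
      intro m
      rw [ContinuousLinearMap.toWOT_apply]
      rw [aeval_eq_sum_range (R := ℂ)]
      rw [ContinuousLinearMap.sum_apply]
      rw [map_sum]
      apply Finset.sum_congr rfl
      intro d _
      rw [ContinuousLinearMap.smul_apply, map_smul]
      rfl
    rw [hF]
    simp only [happ]
    have hmul : ∀ x : Fin (J+1),
        c x * ∑ d ∈ Finset.range (P.natDegree+1), P.coeff d * u d (p ^ (x:ℕ))
        = ∑ d ∈ Finset.range (P.natDegree+1), P.coeff d * (c x * u d (p ^ (x:ℕ))) := by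
      intro x
      rw [Finset.mul_sum]
      exact Finset.sum_congr rfl (fun d _ => by ring)
    simp only [hmul]
    rw [Finset.sum_comm, ← Finset.sum_sub_distrib]
    apply Finset.sum_eq_zero
    intro d _
    rw [← Finset.mul_sum, ← hrel d, sub_self]
  -- F is nonzero at Cφt
  have hFne : F (ContinuousLinearMapWOT.ofCLM (σ := RingHom.id ℂ) (E := HardyDisc) (F := HardyDisc) Cφt) ≠ 0 := by
    rw [hF]
    simp only [ContinuousLinearMap.toWOT_apply, coordCLM_apply]
    have h1 : ∀ i : Fin (J+1), (Cφt e1 : HardyDisc) (p ^ (i:ℕ)) = 0 := by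
      intro i
      apply hcoefft.1
      have hle : p ^ (i:ℕ) ≤ q := le_trans (Nat.pow_le_pow_right (by omega) (by omega)) hpJ
      rcases lt_or_eq_of_le hle with h | h
      · exact h
      · exfalso
        rcases Nat.eq_zero_or_pos (i:ℕ) with h0 | h0
        · rw [h0] at h; simp at h; omega
        · exact hpq (h ▸ dvd_pow_self p (by omega))
    simp only [h1, mul_zero, Finset.sum_const_zero, sub_zero, hcoefft.2]
    exact mul_ne_zero hmu hψt0
  -- conclude
  intro hmem
  have hclosed : IsClosed {B : HardyDisc →WOT[ℂ] HardyDisc | F B = 0} :=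
    isClosed_eq hFcont continuous_const
  have := closure_minimal hFzero hclosed hmem
  exact hFne this
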